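/- Let σ : [0,1]² → (0,∞) be continuous, and for each n let V_n be the n×n matrix with entries (V_n)_{ij} = (1/n) σ(i/n, j/n)². Let 𝐕 be the bounded linear operator on the Banach space C([0,1]) of continuous real-valued functions on [0,1] defined by (𝐕f)(x) = ∫_0^1 σ(x,y)² f(y) dy. Then the spectral radius ρ(V_n) of the matrix V_n converges, as n → ∞, to the spectral radius ρ(𝐕) of the operator 𝐕. -/

import Mathlib

open MeasureTheory Filter Topology
open scoped ENNReal NNReal

noncomputable def specRad {n : ℕ} (V : Matrix (Fin n) (Fin n) ℝ) : ℝ :=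
  sSup {r : ℝ | ∃ μ : ℂ, r = ‖μ‖ ∧
    Module.End.HasEigenvalue (Matrix.toLin' (V.map (fun x : ℝ => (x : ℂ)))) μ}

attribute [local instance] Matrix.linftyOpNormedRing Matrix.linftyOpNormedAlgebra

lemma pow_entry_nonneg {n : ℕ} {V : Matrix (Fin n) (Fin n) ℝ}
    (hpos : ∀ i j, 0 ≤ V i j) (k : ℕ) : ∀ i j, 0 ≤ (V ^ k) i j := by
  induction k with
  | zero => intro i j; by_cases h : i = j <;> simp [pow_zero, Matrix.one_apply, h]
  | succ k ih =>
    intro i j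
    rw [pow_succ, Matrix.mul_apply]
    exact Finset.sum_nonneg fun l _ => mul_nonneg (ih i l) (hpos l j)

lemma specRad_tendsto {n : ℕ} (hn : 0 < n) (V : Matrix (Fin n) (Fin n) ℝ)
    (hpos : ∀ i j, 0 ≤ V i j) :
    Tendsto (fun k : ℕ => ‖(V ^ k).mulVec (fun _ => (1:ℝ))‖ ^ ((1:ℝ)/k)) atTop
      (𝓝 (specRad V)) := by
  haveI : Nonempty (Fin n) := Fin.pos_iff_nonempty.mp hn
  haveI : CompleteSpace (Matrix (Fin n) (Fin n) ℂ) := FiniteDimensional.complete ℂ _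
  set A : Matrix (Fin n) (Fin n) ℂ := V.map (fun x : ℝ => (x : ℂ)) with hA
  -- identify specRad with spectralRadius
  have hspec : spectrum ℂ (Matrix.toLin' A) = spectrum ℂ A := by
    have : Matrix.toLin' A = Matrix.toLinAlgEquiv' A := rfl
    rw [this, AlgEquiv.spectrum_eq]
  have hset : {r : ℝ | ∃ μ : ℂ, r = ‖μ‖ ∧
      Module.End.HasEigenvalue (Matrix.toLin' A) μ}
      = (fun μ : ℂ => ‖μ‖) '' spectrum ℂ A := by
    ext r
    simp only [Set.mem_setOf_eq, Set.mem_image]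
    constructor
    · rintro ⟨μ, rfl, hμ⟩
      exact ⟨μ, hspec ▸ Module.End.hasEigenvalue_iff_mem_spectrum.mp hμ, rfl⟩
    · rintro ⟨μ, hμ, rfl⟩
      exact ⟨μ, rfl, Module.End.hasEigenvalue_iff_mem_spectrum.mpr (hspec ▸ hμ)⟩
  obtain ⟨z, hz, hznorm⟩ := spectrum.exists_nnnorm_eq_spectralRadius A
  have hle : ∀ μ ∈ spectrum ℂ A, ‖μ‖ ≤ ‖z‖ := by
    intro μ hμ
    have h1 : (‖μ‖₊ : ℝ≥0∞) ≤ spectralRadius ℂ A := by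
      rw [spectralRadius]
      exact le_iSup₂ (f := fun k (_ : k ∈ spectrum ℂ A) => (‖k‖₊ : ℝ≥0∞)) μ hμ
    rw [← hznorm] at h1
    have := ENNReal.coe_le_coe.mp h1
    simpa [← NNReal.coe_le_coe] using this
  have hgreat : IsGreatest ((fun μ : ℂ => ‖μ‖) '' spectrum ℂ A) ‖z‖ :=
    ⟨⟨z, hz, rfl⟩, by rintro r ⟨μ, hμ, rfl⟩; exact hle μ hμ⟩
  have hsr : specRad V = (spectralRadius ℂ A).toReal := by
    rw [specRad, hset, hgreat.csSup_eq, ← hznorm]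
    simp [ENNReal.coe_toReal, coe_nnnorm]
  -- Gelfand
  have hg := spectrum.pow_nnnorm_pow_one_div_tendsto_nhds_spectralRadius A
  have hne : spectralRadius ℂ A ≠ ⊤ :=
    by rw [← hznorm]; exact ENNReal.coe_ne_top
  have hg2 := (ENNReal.tendsto_toReal hne).comp hg
  rw [hsr]
  convert hg2 using 2 with k
  simp only [Function.comp_apply]
  rw [← ENNReal.toReal_rpow]
  congr 1
  -- ‖A ^ k‖ = ‖(V ^ k).mulVec 1‖
  have hApow : A ^ k = (V ^ k).map (fun x : ℝ => (x : ℂ)) := by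
    have : A = Complex.ofRealHom.mapMatrix V := rfl
    rw [this, ← map_pow]; rfl
  rw [hApow, ENNReal.coe_toReal, ← coe_nnnorm, NNReal.coe_inj]
  rw [Matrix.linfty_opNNNorm_def, Pi.nnnorm_def]
  congr 1
  funext i
  apply NNReal.coe_injective
  push_cast
  simp only [coe_nnnorm, Real.norm_eq_abs, Matrix.mulVec, dotProduct, mul_one,
    Matrix.map_apply, Complex.norm_real]
  rw [abs_of_nonneg (Finset.sum_nonneg fun j _ => pow_entry_nonneg hpos k i j)]
  exact Finset.sum_congr rfl fun j _ => (abs_of_nonneg (pow_entry_nonneg hpos k i j)).symm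

set_option maxHeartbeats 2000000 in
/-- For a continuous positive `σ : [0,1]² → (0,∞)`, the spectral radii of the sampled
matrices `V_n = ((1/n) σ(i/n, j/n)²)` converge, as `n → ∞`, to the spectral radius
`ρ(𝐕) = lim_k ‖𝐕^k‖^{1/k}` of the integral operator `(𝐕f)(x) = ∫₀¹ σ(x,y)² f(y) dy`
on the Banach space `C([0,1])`. -/
theorem sampled_spectral_radius_tendsto_operator_spectral_radius
    (σ : ℝ → ℝ → ℝ)
    (hσc : ContinuousOn (fun p : ℝ × ℝ => σ p.1 p.2)
      (Set.Icc 0 1 ×ˢ Set.Icc 0 1))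
    (hσpos : ∀ x ∈ Set.Icc (0:ℝ) 1, ∀ y ∈ Set.Icc (0:ℝ) 1, 0 < σ x y)
    (V : ∀ n : ℕ, Matrix (Fin n) (Fin n) ℝ)
    (hV : ∀ n : ℕ, ∀ i j : Fin n,
      V n i j = (n : ℝ)⁻¹ * σ (((i : ℕ) + 1) / n) (((j : ℕ) + 1) / n) ^ 2)
    (T : C(Set.Icc (0:ℝ) 1, ℝ) →L[ℝ] C(Set.Icc (0:ℝ) 1, ℝ))
    (hT : ∀ (f : C(Set.Icc (0:ℝ) 1, ℝ)) (x : Set.Icc (0:ℝ) 1),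
      T f x = ∫ y : Set.Icc (0:ℝ) 1, σ (x : ℝ) (y : ℝ) ^ 2 * f y)
    (ρT : ℝ)
    (hρT : Tendsto (fun k : ℕ => ‖T ^ k‖ ^ ((1 : ℝ) / k)) atTop (nhds ρT)) :
    Tendsto (fun n : ℕ => specRad (V n)) atTop (nhds ρT) := by
  classical
  set K : ℝ → ℝ → ℝ := fun x y => σ x y ^ 2 with hKdef
  set Q : Set (ℝ × ℝ) := Set.Icc 0 1 ×ˢ Set.Icc 0 1 with hQ
  have hK0 : ∀ x y, 0 ≤ K x y := fun x y => sq_nonneg _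
  have hKc : ContinuousOn (fun p : ℝ × ℝ => K p.1 p.2) Q := hσc.pow 2
  have hQcomp : IsCompact Q := (isCompact_Icc).prod isCompact_Icc
  have h00 : ((0:ℝ), (0:ℝ)) ∈ Q := by
    constructor <;> exact ⟨le_refl 0, zero_le_one⟩
  -- minimum of the kernel
  obtain ⟨p₀, hp₀Q, hp₀min⟩ := hQcomp.exists_isMinOn ⟨_, h00⟩ hKc
  set δK : ℝ := K p₀.1 p₀.2 with hδKdef
  have hδK : 0 < δK := pow_pos (hσpos _ hp₀Q.1 _ hp₀Q.2) 2
  have hKδ : ∀ p ∈ Q, δK ≤ K p.1 p.2 := fun p hp => hp₀min hp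
  -- the iterates of T applied to 1
  set f : ℕ → C(Set.Icc (0:ℝ) 1, ℝ) := fun k => (T ^ k) 1 with hfdef
  have hfsucc : ∀ k, f (k+1) = T (f k) := by
    intro k
    simp only [hfdef, pow_succ']
    rfl
  -- T is positive and monotone
  have hTpos : ∀ (g : C(Set.Icc (0:ℝ) 1, ℝ)), (∀ x, 0 ≤ g x) → ∀ x, 0 ≤ T g x := by
    intro g hg x
    rw [hT]
    exact integral_nonneg fun y => mul_nonneg (sq_nonneg _) (hg y)
  have hTmono : ∀ (g h : C(Set.Icc (0:ℝ) 1, ℝ)), (∀ x, g x ≤ h x) → ∀ x, T g x ≤ T h x := by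
    intro g h hgh x
    have h1 : ∀ z, 0 ≤ (h - g) z := fun z => by
      simp only [ContinuousMap.sub_apply]; linarith [hgh z]
    have := hTpos (h - g) h1 x
    rw [map_sub] at this
    simp only [ContinuousMap.sub_apply] at this
    linarith
  have hTabs : ∀ (g : C(Set.Icc (0:ℝ) 1, ℝ)) (x : Set.Icc (0:ℝ) 1), |T g x| ≤ T |g| x := by
    intro g x
    rw [hT, hT]
    calc |∫ y : Set.Icc (0:ℝ) 1, σ (x:ℝ) (y:ℝ) ^ 2 * g y| ≤ ∫ y : Set.Icc (0:ℝ) 1, |σ (x:ℝ) (y:ℝ) ^ 2 * g y| := by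
          exact
            MeasureTheory.norm_integral_le_integral_norm (μ := volume) (fun y : Set.Icc (0:ℝ) 1 => σ (x:ℝ) (y:ℝ) ^ 2 * g y)
      _ = ∫ y : Set.Icc (0:ℝ) 1, σ (x:ℝ) (y:ℝ) ^ 2 * |g| y := by
          congr 1; funext y
          rw [abs_mul, abs_of_nonneg (sq_nonneg _)]
          simp [ContinuousMap.abs_apply]
  -- iterates are positive, monotone, dominate abs
  have hpow : ∀ k : ℕ, (∀ (g h : C(Set.Icc (0:ℝ) 1, ℝ)), (∀ x, g x ≤ h x) → ∀ x, (T ^ k) g x ≤ (T ^ k) h x)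
      ∧ (∀ (g : C(Set.Icc (0:ℝ) 1, ℝ)) (x : Set.Icc (0:ℝ) 1), |(T ^ k) g x| ≤ (T ^ k) |g| x) := by
    intro k
    induction k with
    | zero =>
      constructor
      · intro g h hgh x; simpa using hgh x
      · intro g x; simp [ContinuousMap.abs_apply]
    | succ k ih =>
      have happ : ∀ g : C(Set.Icc (0:ℝ) 1, ℝ), (T ^ (k+1)) g = T ((T ^ k) g) := by
        intro g; rw [pow_succ']; rfl
      constructor
      · intro g h hgh x
        rw [happ, happ]
        exact hTmono _ _ (ih.1 g h hgh) x
      · intro g x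
        rw [happ, happ]
        calc |T ((T ^ k) g) x| ≤ T |(T ^ k) g| x := hTabs _ x
          _ ≤ T ((T ^ k) |g|) x := hTmono _ _ (fun z => by
              simpa [ContinuousMap.abs_apply] using ih.2 g z) x
  have hfpos : ∀ k (x : Set.Icc (0:ℝ) 1), 0 ≤ f k x := by
    intro k x
    have h01 : ∀ z : Set.Icc (0:ℝ) 1, (0 : C(Set.Icc (0:ℝ) 1, ℝ)) z ≤ (1 : C(Set.Icc (0:ℝ) 1, ℝ)) z := by
      intro z; simp
    have := (hpow k).1 0 1 h01 x
    simpa [hfdef] using this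
  -- operator norm equals norm of iterate at 1
  have hXne : Nonempty (Set.Icc (0:ℝ) 1) := ⟨⟨0, le_refl 0, zero_le_one⟩⟩
  have hTk : ∀ k, ‖T ^ k‖ = ‖f k‖ := by
    intro k
    apply le_antisymm
    · apply ContinuousLinearMap.opNorm_le_bound _ (norm_nonneg _)
      intro g
      rw [mul_comm]
      apply (ContinuousMap.norm_le _ (mul_nonneg (norm_nonneg g) (norm_nonneg _))).mpr
      intro x
      have h1 : |(T ^ k) g x| ≤ (T ^ k) |g| x := (hpow k).2 g x
      have h2 : (T ^ k) |g| x ≤ (T ^ k) (‖g‖ • (1:C(Set.Icc (0:ℝ) 1, ℝ))) x := by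
        apply (hpow k).1
        intro z
        simp only [ContinuousMap.abs_apply, ContinuousMap.smul_apply,
          ContinuousMap.one_apply, smul_eq_mul, mul_one]
        exact (g.norm_coe_le_norm z)
      have h3 : (T ^ k) (‖g‖ • (1:C(Set.Icc (0:ℝ) 1, ℝ))) x = ‖g‖ * f k x := by
        rw [(T ^ k).map_smul]; simp [hfdef]
      have h4 : f k x ≤ ‖f k‖ := by
        calc f k x ≤ |f k x| := le_abs_self _
          _ ≤ ‖f k‖ := (f k).norm_coe_le_norm x
      calc ‖(T ^ k) g x‖ = |(T ^ k) g x| := rfl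
        _ ≤ ‖g‖ * f k x := by rw [← h3]; exact h1.trans h2
        _ ≤ ‖g‖ * ‖f k‖ := by
            apply mul_le_mul_of_nonneg_left h4 (norm_nonneg g)
    · calc ‖f k‖ = ‖(T ^ k) 1‖ := rfl
        _ ≤ ‖T ^ k‖ * ‖(1:C(Set.Icc (0:ℝ) 1, ℝ))‖ := (T ^ k).le_opNorm 1
        _ = ‖T ^ k‖ := by rw [norm_one, mul_one]
  have hρT0 : 0 ≤ ρT := ge_of_tendsto' hρT (fun k => Real.rpow_nonneg (norm_nonneg (T ^ k)) _)
  have hmeasIcc : MeasurableSet (Set.Icc (0:ℝ) 1) := measurableSet_Icc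
  have hTrep : ∀ (g : C(Set.Icc (0:ℝ) 1, ℝ)) (x : Set.Icc (0:ℝ) 1),
      T g x = ∫ y in Set.Icc (0:ℝ) 1, K (x:ℝ) y * g (Set.projIcc 0 1 zero_le_one y) := by
    intro g x
    rw [hT]
    rw [← MeasureTheory.integral_subtype hmeasIcc
      (fun y => K (x:ℝ) y * g (Set.projIcc 0 1 zero_le_one y))]
    congr 1
    funext y
    rw [Set.projIcc_val]
  have hgcont : ∀ (x : Set.Icc (0:ℝ) 1) (g : C(Set.Icc (0:ℝ) 1, ℝ)),
      ContinuousOn (fun y : ℝ => K (x:ℝ) y * g (Set.projIcc 0 1 zero_le_one y))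
        (Set.Icc 0 1) := by
    intro x g
    apply ContinuousOn.mul
    · have hmap : ContinuousOn (fun y : ℝ => ((x:ℝ), y)) (Set.Icc 0 1) :=
        (continuous_const.prodMk continuous_id).continuousOn
      exact hKc.comp hmap (fun y hy => Set.mem_prod.mpr ⟨x.2, hy⟩)
    · exact (g.continuous.comp continuous_projIcc).continuousOn
  have central : ∀ η : ℝ, 0 < η → η ≤ 1/2 →
      ∃ N : ℕ, ∀ n ≥ N, 1 ≤ n →
        (1 - η) * ρT ≤ specRad (V n) ∧ specRad (V n) ≤ (1 + η) * ρT := by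
    intro η hη hη2
    obtain ⟨d, hd, hdK⟩ : ∃ d > 0, ∀ p ∈ Q, ∀ q ∈ Q, dist p q < d →
        |K p.1 p.2 - K q.1 q.2| ≤ η * δK := by
      have huc := hQcomp.uniformContinuousOn_of_continuous hKc
      rw [Metric.uniformContinuousOn_iff] at huc
      obtain ⟨d, hd, h⟩ := huc (η * δK) (mul_pos hη hδK)
      refine ⟨d, hd, fun p hp q hq hpq => ?_⟩
      have := h p hp q hq hpq
      rw [Real.dist_eq] at this
      exact this.le
    refine ⟨max 1 (⌈1/d⌉₊ + 1), fun n hn hn1 => ?_⟩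
    have hn0 : (0:ℝ) < n := by exact_mod_cast hn1
    have hdn : (1:ℝ)/n < d := by
      have h1 : ((⌈1/d⌉₊ + 1 : ℕ) : ℝ) ≤ n := by
        exact_mod_cast le_trans (le_max_right _ _) hn
      have h2 : (1:ℝ)/d < n := by
        have := Nat.le_ceil (1/d)
        push_cast at h1
        linarith
      rw [div_lt_iff₀ hn0]
      rw [div_lt_iff₀ hd] at h2
      rw [mul_comm]
      exact h2
    -- kernel two-sided comparison
    have hker : ∀ s t x y : ℝ, s ∈ Set.Icc (0:ℝ) 1 → t ∈ Set.Icc (0:ℝ) 1 →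
        x ∈ Set.Icc (0:ℝ) 1 → y ∈ Set.Icc (0:ℝ) 1 →
        |s - x| ≤ 1/n → |t - y| ≤ 1/n →
        (1 - η) * K x y ≤ K s t ∧ K s t ≤ (1 + η) * K x y := by
      intro s t x y hs ht hx hy h1 h2
      have hPQ : ((s, t) : ℝ × ℝ) ∈ Q := Set.mem_prod.mpr ⟨hs, ht⟩
      have hpq : ((x, y) : ℝ × ℝ) ∈ Q := Set.mem_prod.mpr ⟨hx, hy⟩
      have hdist : dist ((s, t) : ℝ × ℝ) ((x, y) : ℝ × ℝ) < d := by
        rw [Prod.dist_eq]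
        apply max_lt <;> rw [Real.dist_eq] <;>
          [exact lt_of_le_of_lt h1 hdn; exact lt_of_le_of_lt h2 hdn]
      have hclose := hdK _ hPQ _ hpq hdist
      have hδxy : δK ≤ K x y := hKδ (x, y) hpq
      have habs := abs_le.mp hclose
      constructor
      · nlinarith [habs.1, habs.2]
      · nlinarith [habs.1, habs.2]
    -- the discrete iterates
    have hVpos : ∀ i j : Fin n, 0 ≤ V n i j := by
      intro i j
      rw [hV]
      positivity
    set u : ℕ → Fin n → ℝ := fun k => ((V n) ^ k).mulVec (fun _ => 1) with hudef
    have hu0 : ∀ i, u 0 i = 1 := by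
      intro i
      simp [hudef, Matrix.one_mulVec]
    have husucc : ∀ k (i : Fin n), u (k+1) i = ∑ j, V n i j * u k j := by
      intro k i
      have : (V n) ^ (k+1) = (V n) * (V n) ^ k := pow_succ' _ _
      rw [hudef]
      simp only [this, ← Matrix.mulVec_mulVec]
      simp [Matrix.mulVec, dotProduct]
    have hupos : ∀ k (i : Fin n), 0 ≤ u k i := by
      intro k i
      rw [hudef]
      simp only [Matrix.mulVec, dotProduct]
      exact Finset.sum_nonneg fun j _ =>
        mul_nonneg (pow_entry_nonneg hVpos k i j) zero_le_one
    have hη1 : (0:ℝ) < 1 - η := by linarith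
    have h1η : (0:ℝ) < 1 + η := by linarith
    have hsmem : ∀ i : Fin n, ((((i:ℕ):ℝ)+1)/n) ∈ Set.Icc (0:ℝ) 1 := by
      intro i
      constructor
      · positivity
      · rw [div_le_one hn0]
        have : (i:ℕ) + 1 ≤ n := i.2
        exact_mod_cast this
    have hIccsub : ∀ i : Fin n, ∀ x : ℝ, ((i:ℕ):ℝ)/n ≤ x → x ≤ (((i:ℕ):ℝ)+1)/n →
        x ∈ Set.Icc (0:ℝ) 1 := by
      intro i x h1 h2
      constructor
      · exact le_trans (by positivity) h1
      · exact le_trans h2 (hsmem i).2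
    -- the key induction
    have key : ∀ k : ℕ, ∀ i : Fin n, ∀ xr : ℝ,
        ((i:ℕ):ℝ)/n ≤ xr → xr ≤ (((i:ℕ):ℝ)+1)/n →
        ∀ hxr : xr ∈ Set.Icc (0:ℝ) 1,
        (1 - η)^k * f k ⟨xr, hxr⟩ ≤ u k i ∧ u k i ≤ (1 + η)^k * f k ⟨xr, hxr⟩ := by
      intro k
      induction k with
      | zero =>
        intro i xr h1 h2 hxr
        have hf0 : f 0 ⟨xr, hxr⟩ = 1 := by simp [hfdef]
        rw [hf0, hu0]
        norm_num
      | succ k ih =>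
        intro i xr hxr1 hxr2 hxr
        set g : ℝ → ℝ := fun y => K xr y * f k (Set.projIcc 0 1 zero_le_one y) with hgdef
        have hfx : f (k+1) ⟨xr, hxr⟩ = ∫ y in Set.Icc (0:ℝ) 1, g y := by
          rw [hfsucc, hTrep]
        have hgc : ContinuousOn g (Set.Icc 0 1) := hgcont ⟨xr, hxr⟩ (f k)
        have hii : ∀ j : Fin n, IntegrableOn g
            (Set.Ioc (((j:ℕ):ℝ)/n) ((((j:ℕ):ℝ)+1)/n)) := by
          intro j
          apply ((hgc.mono (fun y hy => hIccsub j y hy.1 hy.2)).integrableOn_Icc).mono_set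
          exact Set.Ioc_subset_Icc_self
        have hvol : ∀ j : Fin n,
            (volume (Set.Ioc (((j:ℕ):ℝ)/n) ((((j:ℕ):ℝ)+1)/n))).toReal = 1/n := by
          intro j
          rw [Real.volume_Ioc, ENNReal.toReal_ofReal (by
            have : (((j:ℕ):ℝ)+1)/n - ((j:ℕ):ℝ)/n = 1/n := by ring
            rw [this]; positivity)]
          ring
        have hsplit : ∫ y in Set.Icc (0:ℝ) 1, g y
            = ∑ j : Fin n, ∫ y in Set.Ioc (((j:ℕ):ℝ)/n) ((((j:ℕ):ℝ)+1)/n), g y := by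
          have hint : ∀ j : ℕ, j < n →
              IntervalIntegrable g volume ((j:ℝ)/n) (((j:ℝ)+1)/n) := by
            intro j hj
            apply ContinuousOn.intervalIntegrable
            have hle : (j:ℝ)/n ≤ ((j:ℝ)+1)/n := by
              apply div_le_div_of_nonneg_right ?_ hn0.le
              linarith
            rw [Set.uIcc_of_le hle]
            apply hgc.mono
            intro y hy
            constructor
            · exact le_trans (by positivity) hy.1
            · refine le_trans hy.2 ?_
              rw [div_le_one hn0]
              exact_mod_cast hj
          have hint' : ∀ j : ℕ, j < n →
              IntervalIntegrable g volume ((j:ℝ)/n) ((((j:ℕ)+1:ℕ):ℝ)/n) := by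
            intro j hj
            have : ((((j:ℕ)+1:ℕ)):ℝ)/n = ((j:ℝ)+1)/n := by push_cast; ring
            rw [this]
            exact hint j hj
          have hadj := intervalIntegral.sum_integral_adjacent_intervals
            (a := fun j : ℕ => (j:ℝ)/n) (n := n) hint'
          have ha0 : ((0:ℕ):ℝ)/n = 0 := by norm_num
          have han : ((n:ℕ):ℝ)/n = 1 := by
            rw [div_eq_one_iff_eq (ne_of_gt hn0)]
          rw [MeasureTheory.integral_Icc_eq_integral_Ioc,
            ← intervalIntegral.integral_of_le zero_le_one]
          calc ∫ y in (0:ℝ)..1, g y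
              = ∫ y in (((0:ℕ):ℝ)/n)..(((n:ℕ):ℝ)/n), g y := by rw [ha0, han]
            _ = ∑ j ∈ Finset.range n, ∫ y in ((j:ℝ)/n)..((((j:ℕ)+1:ℕ)):ℝ)/n, g y :=
                hadj.symm
            _ = ∑ j : Fin n, ∫ y in Set.Ioc (((j:ℕ):ℝ)/n) ((((j:ℕ):ℝ)+1)/n), g y := by
                rw [← Fin.sum_univ_eq_sum_range
                  (fun j => ∫ y in ((j:ℝ)/n)..((((j:ℕ)+1:ℕ)):ℝ)/n, g y) n]
                apply Finset.sum_congr rfl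
                intro j _
                have h1 : ((((j:ℕ)+1:ℕ)):ℝ)/n = (((j:ℕ):ℝ)+1)/n := by push_cast; ring
                have hle : ((j:ℕ):ℝ)/n ≤ (((j:ℕ):ℝ)+1)/n := by
                  apply div_le_div_of_nonneg_right ?_ hn0.le
                  linarith
                rw [h1, intervalIntegral.integral_of_le hle]
        have hjbound : ∀ j : Fin n,
            ((1 - η)^(k+1) * ∫ y in Set.Ioc (((j:ℕ):ℝ)/n) ((((j:ℕ):ℝ)+1)/n), g y)
              ≤ V n i j * u k j
            ∧ V n i j * u k j
              ≤ (1 + η)^(k+1) * ∫ y in Set.Ioc (((j:ℕ):ℝ)/n) ((((j:ℕ):ℝ)+1)/n), g y := by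
          intro j
          have hVij : V n i j = 1/n * K ((((i:ℕ):ℝ)+1)/n) ((((j:ℕ):ℝ)+1)/n) := by
            rw [hV, hKdef]
            simp only [one_div]
          have hdisti : |(((i:ℕ):ℝ)+1)/n - xr| ≤ 1/n := by
            rw [abs_le]
            have : (((i:ℕ):ℝ)+1)/n - ((i:ℕ):ℝ)/n = 1/n := by ring
            constructor
            · have h1n : (0:ℝ) ≤ 1/n := by positivity
              linarith
            · linarith
          have hgy : ∀ y ∈ Set.Ioc (((j:ℕ):ℝ)/n) ((((j:ℕ):ℝ)+1)/n),
              ∃ hyI : y ∈ Set.Icc (0:ℝ) 1,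
                g y = K xr y * f k ⟨y, hyI⟩
                ∧ (1 - η) * K xr y ≤ K ((((i:ℕ):ℝ)+1)/n) ((((j:ℕ):ℝ)+1)/n)
                ∧ K ((((i:ℕ):ℝ)+1)/n) ((((j:ℕ):ℝ)+1)/n) ≤ (1 + η) * K xr y
                ∧ (1 - η)^k * f k ⟨y, hyI⟩ ≤ u k j
                ∧ u k j ≤ (1 + η)^k * f k ⟨y, hyI⟩ := by
            intro y hy
            have hyI : y ∈ Set.Icc (0:ℝ) 1 := hIccsub j y hy.1.le hy.2
            have hdistj : |(((j:ℕ):ℝ)+1)/n - y| ≤ 1/n := by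
              rw [abs_le]
              have : (((j:ℕ):ℝ)+1)/n - ((j:ℕ):ℝ)/n = 1/n := by ring
              constructor
              · have h1n : (0:ℝ) ≤ 1/n := by positivity
                have := hy.2
                linarith
              · have := hy.1
                linarith
            have hk2 := hker _ _ xr y (hsmem i) (hsmem j) hxr hyI hdisti hdistj
            have hih := ih j y hy.1.le hy.2 hyI
            refine ⟨hyI, ?_, hk2.1, hk2.2, hih.1, hih.2⟩
            rw [hgdef]
            simp only
            rw [Set.projIcc_of_mem zero_le_one hyI]
          constructor
          · -- lower bound
            set c' : ℝ := K ((((i:ℕ):ℝ)+1)/n) ((((j:ℕ):ℝ)+1)/n) * u k j / (1-η)^(k+1)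
              with hc'def
            have hgle : ∀ y ∈ Set.Ioc (((j:ℕ):ℝ)/n) ((((j:ℕ):ℝ)+1)/n), g y ≤ c' := by
              intro y hy
              obtain ⟨hyI, hgeq, hlo, hhi, hul, huu⟩ := hgy y hy
              rw [hc'def, le_div_iff₀ (pow_pos hη1 (k+1))]
              calc g y * (1-η)^(k+1)
                  = ((1-η) * K xr y) * ((1-η)^k * f k ⟨y, hyI⟩) := by rw [hgeq]; ring
                _ ≤ K ((((i:ℕ):ℝ)+1)/n) ((((j:ℕ):ℝ)+1)/n) * u k j :=
                    mul_le_mul hlo hul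
                      (mul_nonneg (pow_nonneg hη1.le k) (hfpos k _)) (hK0 _ _)
            have hIle : ∫ y in Set.Ioc (((j:ℕ):ℝ)/n) ((((j:ℕ):ℝ)+1)/n), g y
                ≤ 1/n * c' := by
              have hconst : IntegrableOn (fun _ : ℝ => c')
                  (Set.Ioc (((j:ℕ):ℝ)/n) ((((j:ℕ):ℝ)+1)/n)) := (integrableOn_const_iff).mpr
                (Or.inr (by rw [Real.volume_Ioc]; exact ENNReal.ofReal_lt_top))
              have := MeasureTheory.setIntegral_mono_on (hf := hii j) (hg := hconst)
                measurableSet_Ioc hgle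
              rwa [MeasureTheory.setIntegral_const, measureReal_def, hvol j, smul_eq_mul] at this
            have hc'pos : (1-η)^(k+1) * (1/n * c') = V n i j * u k j := by
              rw [hc'def, hVij]
              field_simp
            calc (1 - η)^(k+1) * ∫ y in Set.Ioc (((j:ℕ):ℝ)/n) ((((j:ℕ):ℝ)+1)/n), g y
                ≤ (1-η)^(k+1) * (1/n * c') :=
                  mul_le_mul_of_nonneg_left hIle (pow_nonneg hη1.le _)
              _ = V n i j * u k j := hc'pos
          · -- upper bound
            set c : ℝ := K ((((i:ℕ):ℝ)+1)/n) ((((j:ℕ):ℝ)+1)/n) * u k j / (1+η)^(k+1)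
              with hcdef
            have hgge : ∀ y ∈ Set.Ioc (((j:ℕ):ℝ)/n) ((((j:ℕ):ℝ)+1)/n), c ≤ g y := by
              intro y hy
              obtain ⟨hyI, hgeq, hlo, hhi, hul, huu⟩ := hgy y hy
              rw [hcdef, div_le_iff₀ (pow_pos h1η (k+1))]
              calc K ((((i:ℕ):ℝ)+1)/n) ((((j:ℕ):ℝ)+1)/n) * u k j
                  ≤ ((1+η) * K xr y) * ((1+η)^k * f k ⟨y, hyI⟩) :=
                    mul_le_mul hhi huu (hupos k j)
                      (mul_nonneg h1η.le (hK0 _ _))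
                _ = g y * (1+η)^(k+1) := by rw [hgeq]; ring
            have hIge : 1/n * c
                ≤ ∫ y in Set.Ioc (((j:ℕ):ℝ)/n) ((((j:ℕ):ℝ)+1)/n), g y := by
              have hconst : IntegrableOn (fun _ : ℝ => c)
                  (Set.Ioc (((j:ℕ):ℝ)/n) ((((j:ℕ):ℝ)+1)/n)) := (integrableOn_const_iff).mpr
                (Or.inr (by rw [Real.volume_Ioc]; exact ENNReal.ofReal_lt_top))
              have := MeasureTheory.setIntegral_mono_on (hf := hconst) (hg := hii j)
                measurableSet_Ioc hgge
              rwa [MeasureTheory.setIntegral_const, measureReal_def, hvol j, smul_eq_mul] at this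
            have hceq : (1+η)^(k+1) * (1/n * c) = V n i j * u k j := by
              rw [hcdef, hVij]
              field_simp
            calc V n i j * u k j = (1+η)^(k+1) * (1/n * c) := hceq.symm
              _ ≤ (1+η)^(k+1) * ∫ y in Set.Ioc (((j:ℕ):ℝ)/n) ((((j:ℕ):ℝ)+1)/n), g y :=
                  mul_le_mul_of_nonneg_left hIge (pow_nonneg h1η.le _)
        constructor
        · rw [husucc, hfx, hsplit, Finset.mul_sum]
          exact Finset.sum_le_sum fun j _ => (hjbound j).1
        · rw [husucc, hfx, hsplit, Finset.mul_sum]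
          exact Finset.sum_le_sum fun j _ => (hjbound j).2
    -- sandwich for sup norms
    have hsand : ∀ k : ℕ,
        (1-η)^k * ‖f k‖ ≤ ‖u k‖ ∧ ‖u k‖ ≤ (1+η)^k * ‖f k‖ := by
      intro k
      constructor
      · obtain ⟨xs, -, hmax⟩ := isCompact_univ.exists_isMaxOn Set.univ_nonempty
          ((f k).continuous.continuousOn)
        have hfknorm : ‖f k‖ = f k xs := by
          apply le_antisymm
          · apply (ContinuousMap.norm_le _ (hfpos k xs)).mpr
            intro z
            rw [Real.norm_eq_abs, abs_of_nonneg (hfpos k z)]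
            exact hmax (Set.mem_univ z)
          · calc f k xs ≤ |f k xs| := le_abs_self _
              _ ≤ ‖f k‖ := (f k).norm_coe_le_norm xs
        have hmlt : min (⌊(n:ℝ) * (xs:ℝ)⌋₊) (n-1) < n :=
          lt_of_le_of_lt (min_le_right _ _) (by omega)
        set i : Fin n := ⟨min (⌊(n:ℝ) * (xs:ℝ)⌋₊) (n-1), hmlt⟩ with hidef
        have hxs0 : (0:ℝ) ≤ (xs:ℝ) := xs.2.1
        have hxs1 : (xs:ℝ) ≤ 1 := xs.2.2
        have hbound : ((i:ℕ):ℝ)/n ≤ (xs:ℝ) ∧ (xs:ℝ) ≤ (((i:ℕ):ℝ)+1)/n := by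
          by_cases hc : ⌊(n:ℝ) * (xs:ℝ)⌋₊ ≤ n - 1
          · have him : (i:ℕ) = ⌊(n:ℝ) * (xs:ℝ)⌋₊ := by
              simp [hidef, min_eq_left hc]
            constructor
            · rw [him, div_le_iff₀ hn0]
              calc ((⌊(n:ℝ)*(xs:ℝ)⌋₊:ℕ) : ℝ) ≤ (n:ℝ)*(xs:ℝ) := Nat.floor_le (by positivity)
                _ = (xs:ℝ) * n := by ring
            · rw [him, le_div_iff₀ hn0]
              have h2 := Nat.lt_floor_add_one ((n:ℝ)*(xs:ℝ))
              calc (xs:ℝ) * n = (n:ℝ)*(xs:ℝ) := by ring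
                _ ≤ (⌊(n:ℝ)*(xs:ℝ)⌋₊:ℝ) + 1 := h2.le
          · have hge : (n:ℕ) ≤ ⌊(n:ℝ) * (xs:ℝ)⌋₊ := by omega
            have hxs : (n:ℝ) ≤ (n:ℝ) * (xs:ℝ) := by
              have h5 : ((n:ℕ):ℝ) ≤ ((⌊(n:ℝ)*(xs:ℝ)⌋₊ : ℕ):ℝ) := by exact_mod_cast hge
              calc (n:ℝ) = ((n:ℕ):ℝ) := by norm_cast
                _ ≤ ((⌊(n:ℝ)*(xs:ℝ)⌋₊ : ℕ):ℝ) := h5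
                _ ≤ (n:ℝ)*(xs:ℝ) := Nat.floor_le (by positivity)
            have hxeq : (xs:ℝ) = 1 := by
              have : (1:ℝ) ≤ (xs:ℝ) := by
                nlinarith
              linarith
            have him : (i:ℕ) = n - 1 := by
              simp [hidef, min_eq_right (le_of_not_ge hc)]
            constructor
            · rw [him, hxeq, div_le_one hn0]
              have : (n:ℕ) - 1 ≤ n := Nat.sub_le _ _
              exact_mod_cast this
            · rw [him, hxeq, le_div_iff₀ hn0, one_mul]
              have : ((n - 1 : ℕ):ℝ) + 1 = n := by
                have : (1:ℕ) ≤ n := hn1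
                push_cast [Nat.cast_sub this]
                ring
              rw [this]
        have hkey := (key k i (xs:ℝ) hbound.1 hbound.2 xs.2).1
        simp only [Subtype.coe_eta] at hkey
        calc (1-η)^k * ‖f k‖ = (1-η)^k * f k xs := by rw [hfknorm]
          _ ≤ u k i := hkey
          _ ≤ |u k i| := le_abs_self _
          _ = ‖u k i‖ := (Real.norm_eq_abs _).symm
          _ ≤ ‖u k‖ := norm_le_pi_norm (u k) i
      · apply (pi_norm_le_iff_of_nonneg
          (mul_nonneg (pow_nonneg h1η.le k) (norm_nonneg _))).mpr
        intro i
        have hb1 : ((i:ℕ):ℝ)/n ≤ (((i:ℕ):ℝ)+1)/n := by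
          apply div_le_div_of_nonneg_right ?_ hn0.le
          linarith
        have hkey := (key k i ((((i:ℕ):ℝ)+1)/n) hb1 le_rfl (hsmem i)).2
        rw [Real.norm_eq_abs, abs_of_nonneg (hupos k i)]
        calc u k i ≤ (1+η)^k * f k ⟨(((i:ℕ):ℝ)+1)/n, hsmem i⟩ := hkey
          _ ≤ (1+η)^k * ‖f k‖ := by
              apply mul_le_mul_of_nonneg_left ?_ (pow_nonneg h1η.le k)
              calc f k _ ≤ |f k _| := le_abs_self _
                _ ≤ ‖f k‖ := (f k).norm_coe_le_norm _
    -- pass to the limit in k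
    have hrpow : ∀ (c : ℝ), 0 < c → ∀ k : ℕ, k ≠ 0 → ∀ b : ℝ, 0 ≤ b →
        (c^k * b) ^ ((1:ℝ)/k) = c * b ^ ((1:ℝ)/k) := by
      intro c hc k hk b hb
      rw [Real.mul_rpow (pow_nonneg hc.le k) hb]
      congr 1
      rw [← Real.rpow_natCast c k, ← Real.rpow_mul hc.le]
      rw [mul_one_div, div_self (Nat.cast_ne_zero.mpr hk)]
      exact Real.rpow_one c
    have hlim : Tendsto (fun k : ℕ => ‖u k‖ ^ ((1:ℝ)/k)) atTop (𝓝 (specRad (V n))) := by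
      have := specRad_tendsto (by omega : 0 < n) (V n) hVpos
      simpa [hudef] using this
    constructor
    · have hglim : Tendsto (fun k : ℕ => (1-η) * ‖T ^ k‖ ^ ((1:ℝ)/k)) atTop
          (𝓝 ((1-η) * ρT)) := hρT.const_mul _
      apply le_of_tendsto_of_tendsto' hglim hlim
      intro k
      rcases Nat.eq_zero_or_pos k with hk | hk
      · subst hk
        simp only [Nat.cast_zero, div_zero, Real.rpow_zero, pow_zero, mul_one]
        linarith
      · have h1 : (1-η) * ‖T ^ k‖ ^ ((1:ℝ)/k) = ((1-η)^k * ‖f k‖) ^ ((1:ℝ)/k) := by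
          rw [hrpow _ hη1 k hk.ne' _ (norm_nonneg _), hTk]
        rw [h1]
        exact Real.rpow_le_rpow (mul_nonneg (pow_nonneg hη1.le k) (norm_nonneg _))
          (hsand k).1 (by positivity)
    · have hglim : Tendsto (fun k : ℕ => (1+η) * ‖T ^ k‖ ^ ((1:ℝ)/k)) atTop
          (𝓝 ((1+η) * ρT)) := hρT.const_mul _
      apply le_of_tendsto_of_tendsto' hlim hglim
      intro k
      rcases Nat.eq_zero_or_pos k with hk | hk
      · subst hk
        simp only [Nat.cast_zero, div_zero, Real.rpow_zero, pow_zero, mul_one]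
        linarith
      · have h1 : (1+η) * ‖T ^ k‖ ^ ((1:ℝ)/k) = ((1+η)^k * ‖f k‖) ^ ((1:ℝ)/k) := by
          rw [hrpow _ h1η k hk.ne' _ (norm_nonneg _), hTk]
        rw [h1]
        exact Real.rpow_le_rpow (norm_nonneg _) (hsand k).2 (by positivity)
  -- final assembly
  rw [Metric.tendsto_atTop]
  intro ε hε
  have hηpos : (0:ℝ) < min (1/2) (ε / (2 * (ρT + 1))) :=
    lt_min (by norm_num) (by positivity)
  obtain ⟨N, hN⟩ := central _ hηpos (min_le_left _ _)
  refine ⟨max N 1, fun n hn => ?_⟩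
  have hn1 : 1 ≤ n := le_trans (le_max_right _ _) hn
  obtain ⟨hlo, hhi⟩ := hN n (le_trans (le_max_left _ _) hn) hn1
  set η : ℝ := min (1/2) (ε / (2 * (ρT + 1))) with hηdef
  have habs : |specRad (V n) - ρT| ≤ η * ρT := by
    rw [abs_le]
    constructor <;> nlinarith
  have hfin : η * ρT < ε := by
    have h1 : η ≤ ε / (2*(ρT+1)) := min_le_right _ _
    have h2 : η * ρT ≤ (ε / (2*(ρT+1))) * ρT := mul_le_mul_of_nonneg_right h1 hρT0
    have h3 : (ε / (2*(ρT+1))) * ρT < ε := by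
      rw [div_mul_eq_mul_div, div_lt_iff₀ (by positivity)]
      nlinarith
    linarith
  calc dist (specRad (V n)) ρT = |specRad (V n) - ρT| := Real.dist_eq _ _
    _ ≤ η * ρT := habs
    _ < ε := hfin
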